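/- Let ζ ∈ ℂ be a primitive 15th root of unity and define Q : ℤ × ℤ → ℂ by Q(m,n) = (−1)^(n² + mn) · ζ^(3m² + 2mn). Then for S = {(1,0), (4,1), (3,1), (8,3), (5,2), (2,1), (1,1), (0,1)}, every Q(α) with α ∈ S is a root of unity, and the product over α ∈ S of the multiplicative order of Q(α) equals 30⁴ = 810000. -/

import Mathlib

theorem stmt_14 (ζ : ℂ) (hζ : IsPrimitiveRoot ζ 15)
    (Q : ℤ × ℤ → ℂ) (hQ : ∀ m n : ℤ, Q (m, n) = (-1 : ℂ) ^ (n^2 + m*n) * ζ ^ (3*m^2 + 2*m*n))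
    (S : Finset (ℤ × ℤ)) (hS : S = {(1,0), (4,1), (3,1), (8,3), (5,2), (2,1), (1,1), (0,1)}) :
    (∀ α ∈ S, IsOfFinOrder (Q α)) ∧ ∏ α ∈ S, orderOf (Q α) = 30^4 := by
  have h15 : ζ ^ (15:ℕ) = 1 := hζ.pow_eq_one
  have hfin : IsOfFinOrder ζ := isOfFinOrder_iff_pow_eq_one.mpr ⟨15, by norm_num, h15⟩
  have hord : orderOf ζ = 15 := hζ.eq_orderOf.symm
  have hneg : orderOf (-1 : ℂ) = 2 := by
    rw [orderOf_neg_one]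
    simp [ringChar.eq_zero]
  have hpow : ∀ k : ℕ, orderOf (ζ ^ k) = 15 / Nat.gcd 15 k := by
    intro k
    rw [hfin.orderOf_pow, hord]
  have hnegpow : ∀ k : ℕ, Nat.gcd 15 k = 1 → orderOf (-ζ ^ k) = 30 := by
    intro k hk
    have e : -ζ ^ k = (-1) * ζ ^ k := by ring
    rw [e, (Commute.all (-1:ℂ) (ζ^k)).orderOf_mul_eq_mul_orderOf_of_coprime
        (by rw [hneg, hpow k, hk]; norm_num), hneg, hpow k, hk]
  -- values
  have e1 : Q (1,0) = ζ ^ (3:ℕ) := by rw [hQ]; norm_num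
  have e2 : Q (4,1) = -ζ ^ (56:ℕ) := by rw [hQ]; norm_num
  have e3 : Q (3,1) = ζ ^ (33:ℕ) := by rw [hQ]; norm_num
  have e4 : Q (8,3) = -1 := by
    rw [hQ]
    have h240 : ζ ^ (240:ℕ) = 1 := by
      rw [show (240:ℕ) = 15 * 16 from rfl, pow_mul, h15, one_pow]
    have h240' : ζ ^ (240:ℤ) = 1 := by
      rw [show (240:ℤ) = ((240:ℕ):ℤ) by norm_num, zpow_natCast]; exact h240
    norm_num [h240']
  have e5 : Q (5,2) = ζ ^ (95:ℕ) := by rw [hQ]; norm_num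
  have e6 : Q (2,1) = -ζ ^ (16:ℕ) := by rw [hQ]; norm_num
  have e7 : Q (1,1) = ζ ^ (5:ℕ) := by rw [hQ]; norm_num
  have e8 : Q (0,1) = -1 := by rw [hQ]; norm_num [← zpow_natCast]
  have o1 : orderOf (Q (1,0)) = 5 := by rw [e1, hpow]; norm_num
  have o2 : orderOf (Q (4,1)) = 30 := by rw [e2]; exact hnegpow 56 (by norm_num)
  have o3 : orderOf (Q (3,1)) = 5 := by rw [e3, hpow]; norm_num
  have o4 : orderOf (Q (8,3)) = 2 := by rw [e4]; exact hneg
  have o5 : orderOf (Q (5,2)) = 3 := by rw [e5, hpow]; norm_num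
  have o6 : orderOf (Q (2,1)) = 30 := by rw [e6]; exact hnegpow 16 (by norm_num)
  have o7 : orderOf (Q (1,1)) = 3 := by rw [e7, hpow]; norm_num
  have o8 : orderOf (Q (0,1)) = 2 := by rw [e8]; exact hneg
  subst hS
  constructor
  · intro α hα
    rw [← orderOf_pos_iff]
    fin_cases hα <;> simp_all
  · rw [Finset.prod_insert (by decide), Finset.prod_insert (by decide),
      Finset.prod_insert (by decide), Finset.prod_insert (by decide),
      Finset.prod_insert (by decide), Finset.prod_insert (by decide),
      Finset.prod_insert (by decide), Finset.prod_singleton,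
      o1, o2, o3, o4, o5, o6, o7, o8]
    norm_num
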